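/- Let T be a trace, G the graph derived from T, and ≤ any some-schedulable happens-before relation on T. For all events e, f of T with e ≤ f and e ≠ f, the graph G contains a path from e to f through pairwise distinct nodes. -/
import Mathlib


/-- Operations an event can perform: read/write on a shared variable,
    acquire/release on a mutex. Variables and mutexes are named by naturals. -/
inductive Op : Type where
  | read : ℕ → Op
  | write : ℕ → Op
  | acq : ℕ → Op
  | rel : ℕ → Op
deriving DecidableEq

/-- An event carries a thread identifier, a trace position and an operation. -/
structure Event : Type where
  tid : ℕ
  pos : ℕ
  op : Op
deriving DecidableEq

/-- A trace is well formed if the recorded position of each event equals its index. -/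
def WellFormed (T : List Event) : Prop :=
  ∀ i : Fin T.length, (T.get i).pos = (i : ℕ)

/-- Program-order edge: same thread, earlier position. -/
def POEdge (T : List Event) (e f : Event) : Prop :=
  e ∈ T ∧ f ∈ T ∧ e.tid = f.tid ∧ e.pos < f.pos

/-- Release-acquire edge: a release of mutex `y` before an acquire of `y` in another
    thread, with no intervening acquire of `y` by a thread other than the releasing one. -/
def RADEdge (T : List Event) (e f : Event) : Prop :=
  e ∈ T ∧ f ∈ T ∧ ∃ y, e.op = Op.rel y ∧ f.op = Op.acq y ∧
    e.tid ≠ f.tid ∧ e.pos < f.pos ∧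
    ∀ g ∈ T, e.pos < g.pos → g.pos < f.pos → g.tid ≠ e.tid → g.op ≠ Op.acq y

/-- The happens-before relation: smallest (strict) partial order containing PO and RAD,
    i.e. the transitive closure of the PO and RAD edges. -/
def HB (T : List Event) : Event → Event → Prop :=
  Relation.TransGen (fun e f => POEdge T e f ∨ RADEdge T e f)

/-- Two events are unsynchronized if neither happens before the other. -/
def Unsync (T : List Event) (e f : Event) : Prop := ¬ HB T e f ∧ ¬ HB T f e

/-- Unsynchronized WRD candidates for the read `r` on variable `x`. -/
def W1 (T : List Event) (x : ℕ) (r : Event) : Set Event :=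
  {w | w ∈ T ∧ w.op = Op.write x ∧ Unsync T r w ∧
    ∀ w' ∈ T, w' ≠ w → w'.op = Op.write x → Unsync T r w' → ¬ HB T w w'}

/-- Synchronized WRD candidates for the read `r` on variable `x`. -/
def W2 (T : List Event) (x : ℕ) (r : Event) : Set Event :=
  {w | w ∈ T ∧ w.op = Op.write x ∧ HB T w r ∧
    ∀ w' ∈ T, w' ≠ w → w'.op = Op.write x → HB T w' r → ¬ HB T w w'}

/-- All WRD candidates. -/
def Wcand (T : List Event) (x : ℕ) (r : Event) : Set Event :=
  W1 T x r ∪ W2 T x r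

/-- Write-read dependency edge: the nearest preceding write on the same variable. -/
def WRDEdge (T : List Event) (w r : Event) : Prop :=
  w ∈ T ∧ r ∈ T ∧ ∃ x, w.op = Op.write x ∧ r.op = Op.read x ∧ w.pos < r.pos ∧
    ∀ g ∈ T, w.pos < g.pos → g.pos < r.pos → g.op ≠ Op.write x

/-- The schedulable happens-before relation: smallest partial order containing
    PO, RAD and WRD edges. -/
def SHB (T : List Event) : Event → Event → Prop :=
  Relation.TransGen (fun e f => POEdge T e f ∨ RADEdge T e f ∨ WRDEdge T e f)

/-- Every read event enjoys an initial write. -/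
def InitialWrites (T : List Event) : Prop :=
  ∀ r ∈ T, ∀ x, r.op = Op.read x → (W2 T x r).Nonempty

/-- A some-schedulable happens-before relation: any (strict) partial order satisfying
    PO and RAD such that every read is preceded by some of its WRD candidates. -/
structure SomeSHB (T : List Event) (R : Event → Event → Prop) : Prop where
  trans : ∀ {a b c : Event}, R a b → R b c → R a c
  irrefl : ∀ a : Event, ¬ R a a
  po : ∀ {e f : Event}, POEdge T e f → R e f
  rad : ∀ {e f : Event}, RADEdge T e f → R e f
  wrd : ∀ r ∈ T, ∀ x, r.op = Op.read x → ∃ w ∈ Wcand T x r, R w r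

/-- A WRD-candidate edge of the graph derived from `T` (labelled `W(r)`). -/
def CandEdge (T : List Event) (w r : Event) : Prop :=
  r ∈ T ∧ ∃ x, r.op = Op.read x ∧ w ∈ Wcand T x r

/-- An edge of the graph derived from `T`: an HB edge or a WRD-candidate edge. -/
def GEdge (T : List Event) (e f : Event) : Prop :=
  HB T e f ∨ CandEdge T e f

/-- A path in the graph derived from `T`: a nonempty sequence of edges
    visiting pairwise distinct nodes. -/
def GPath (T : List Event) (e f : Event) : Prop :=
  ∃ (n : ℕ) (p : Fin (n + 1) → Event), 0 < n ∧ Function.Injective p ∧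
    p 0 = e ∧ p (Fin.last n) = f ∧
    ∀ i : Fin n, GEdge T (p i.castSucc) (p i.succ)

/-- A some-schedulable happens-before relation in the "generated" sense of CONTEXT 11:
    the smallest partial order containing the PO edges, the RAD edges, and one chosen
    WRD-candidate edge `c r → r` for every read `r`. -/
def SomeSHBgen (T : List Event) (R : Event → Event → Prop) : Prop :=
  ∃ c : Event → Event,
    (∀ r ∈ T, ∀ x, r.op = Op.read x → c r ∈ Wcand T x r) ∧
    R = Relation.TransGen (fun a b => POEdge T a b ∨ RADEdge T a b ∨
          (b ∈ T ∧ (∃ x, b.op = Op.read x) ∧ a = c b)) ∧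
    (∀ a : Event, ¬ R a a)

/-- Decompose a transitive closure into an indexed chain of base steps. -/
lemma transGen_chain {α : Type*} {B : α → α → Prop} {e f : α}
    (h : Relation.TransGen B e f) :
    ∃ (n : ℕ) (p : ℕ → α), 0 < n ∧ p 0 = e ∧ p n = f ∧
      ∀ i < n, B (p i) (p (i + 1)) := by
  induction h with
  | @single b hb =>
    exact ⟨1, fun i => if i = 0 then e else b, one_pos, by simp, by simp, by
      intro i hi
      interval_cases i
      simpa using hb⟩
  | @tail b f hab hbc ih =>
    obtain ⟨n, p, hn, h0, hlast, hstep⟩ := ih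
    refine ⟨n + 1, fun i => if i ≤ n then p i else f, Nat.succ_pos n, by
        simpa [Nat.zero_le] using h0, by simp, ?_⟩
    intro i hi
    rcases Nat.lt_or_ge i n with h | h
    · have h1 : i ≤ n := le_of_lt h
      have h2 : i + 1 ≤ n := h
      simpa [h1, h2] using hstep i h
    · have hin : i = n := le_antisymm (Nat.lt_succ_iff.mp hi) h
      subst hin
      have h2 : ¬ (i + 1 ≤ i) := by omega
      simpa [le_refl, h2, hlast] using hbc

/-- Monotonicity along a chain of steps of a transitive relation. -/
lemma chain_mono {α : Type*} {R : α → α → Prop}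
    (htr : ∀ a b c : α, R a b → R b c → R a c) (p : ℕ → α) (n : ℕ)
    (hstep : ∀ i < n, R (p i) (p (i + 1))) :
    ∀ j ≤ n, ∀ i < j, R (p i) (p j) := by
  intro j
  induction j with
  | zero => intro _ i hi; omega
  | succ j ih =>
    intro hj i hi
    rcases Nat.lt_or_ge i j with h | h
    · exact htr _ _ _ (ih (by omega) i h) (hstep j (by omega))
    · have : i = j := by omega
      subst this
      exact hstep i (by omega)

/-- for any some-schedulable happens-before relation `R` of `T` and any
    events `e ≤ f` with `e ≠ f`, the graph derived from `T` contains a path from `e`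
    to `f` through pairwise distinct nodes. -/
theorem stmt11 (T : List Event) (hwf : WellFormed T) (R : Event → Event → Prop)
    (hR : SomeSHBgen T R) :
    ∀ e f : Event, R e f → e ≠ f → GPath T e f := by
  obtain ⟨c, hc, hRdef, hirr⟩ := hR
  set B := fun a b => POEdge T a b ∨ RADEdge T a b ∨
      (b ∈ T ∧ (∃ x, b.op = Op.read x) ∧ a = c b) with hB
  -- every base edge is a graph edge and an R-step
  have hBG : ∀ a b, B a b → GEdge T a b := by
    intro a b hb
    rcases hb with h | h | ⟨hbT, ⟨x, hx⟩, ha⟩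
    · exact Or.inl (Relation.TransGen.single (Or.inl h))
    · exact Or.inl (Relation.TransGen.single (Or.inr h))
    · refine Or.inr ⟨hbT, x, hx, ?_⟩
      rw [ha]
      exact hc b hbT x hx
  have hBR : ∀ a b, B a b → R a b := by
    intro a b hb; rw [hRdef]; exact Relation.TransGen.single hb
  have hRtrans : ∀ {a b d : Event}, R a b → R b d → R a d := by
    intro a b d hab hbd
    rw [hRdef] at *
    exact hab.trans hbd
  intro e f hef hne
  rw [hRdef] at hef
  obtain ⟨n, p, hn, h0, hlast, hstep⟩ := transGen_chain hef
  have hRstep : ∀ i < n, R (p i) (p (i + 1)) := fun i hi => hBR _ _ (hstep i hi)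
  have hmono := chain_mono (fun a b d => hRtrans (a:=a) (b:=b) (d:=d)) p n hRstep
  refine ⟨n, fun i => p i.val, hn, ?_, by simpa using h0, by simpa using hlast, ?_⟩
  · intro i j hij
    simp only at hij
    by_contra hne'
    rcases Ne.lt_or_gt (fun h : (i:ℕ) = (j:ℕ) => hne' (Fin.ext h)) with h | h
    · exact hirr (p j.val) (hij ▸ hmono j.val (Nat.lt_succ_iff.mp j.isLt) i.val h)
    · exact hirr (p i.val) (hij ▸ hmono i.val (Nat.lt_succ_iff.mp i.isLt) j.val h)
  · intro i
    simpa using hBG _ _ (hstep i.val i.isLt)
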